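/- Let (t_n) be a strictly increasing sequence of positive reals tending to infinity with ∑ t_n^{-σ} < ∞ for some σ. Then for Re(s) > σ, Γ(s/2) · ∑_{n=1}^∞ t_n^{-s} = ∫_0^∞ x^{s/2−1} θ(x) dx, where θ(x) = ∑_{n=1}^∞ e^{−t_n² x}. -/

import Mathlib

open Filter Topology Set MeasureTheory Real Asymptotics

/-- Mellin transform representation: for a strictly increasing sequence of positive reals
`t_n → ∞` with `∑ t_n^{−σ} < ∞`, and any complex `s` with `Re s > σ`,
`Γ(s/2) ∑ t_n^{−s} = ∫₀^∞ x^{s/2−1} θ(x) dx` where `θ(x) = ∑ e^{−t_n² x}`. -/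
theorem stmt19 (t : ℕ → ℝ) (hmono : StrictMono t) (hpos : ∀ n, 0 < t n)
    (htop : Tendsto t atTop atTop) (σ : ℝ)
    (hσ : Summable (fun n : ℕ => (t n) ^ (-σ))) :
    ∀ s : ℂ, σ < s.re →
      Complex.Gamma (s / 2) * ∑' n : ℕ, ((t n : ℂ)) ^ (-s)
        = ∫ x in Set.Ioi (0 : ℝ), (x : ℂ) ^ (s / 2 - 1) * ∑' n : ℕ, (Real.exp (-(t n) ^ 2 * x) : ℂ) := by
  intro s hs
  -- σ must be positive
  have hσpos : 0 < σ := by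
    by_contra h
    push_neg at h
    have h0 := hσ.tendsto_atTop_zero
    have h2 : ∀ᶠ n : ℕ in atTop, t n ^ (-σ) < 1 := h0.eventually_lt_const one_pos
    have h1 : ∀ᶠ n : ℕ in atTop, (1:ℝ) ≤ t n ^ (-σ) := by
      filter_upwards [htop.eventually_ge_atTop 1] with n hn
      exact Real.one_le_rpow hn (by linarith)
    obtain ⟨n, hn1, hn2⟩ := (h1.and h2).exists
    linarith
  have hsre : 0 < s.re := lt_trans hσpos hs
  have hs2 : 0 < (s / 2).re := by
    rw [Complex.div_ofNat_re]; positivity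
  -- summability of theta series for each x > 0
  have hsum_exp : ∀ x : ℝ, 0 < x → Summable fun n : ℕ => Real.exp (-(t n) ^ 2 * x) := by
    intro x hx
    apply Summable.of_norm_bounded_eventually_nat hσ
    filter_upwards [htop.eventually_ge_atTop (max 1 (σ / x))] with n hn
    have ht1 : (1:ℝ) ≤ t n := le_trans (le_max_left _ _) hn
    have htσ : σ / x ≤ t n := le_trans (le_max_right _ _) hn
    rw [Real.norm_eq_abs, Real.abs_exp, Real.rpow_def_of_pos (hpos n)]
    rw [Real.exp_le_exp]
    have hlog : Real.log (t n) ≤ t n := (Real.log_le_sub_one_of_pos (hpos n)).trans (by linarith)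
    have h1 : σ ≤ t n * x := by
      rw [div_le_iff₀ hx] at htσ; linarith
    have hlognn : 0 ≤ Real.log (t n) := Real.log_nonneg ht1
    nlinarith [sq_nonneg (t n), mul_le_mul_of_nonneg_left hlog hσpos.le]
  -- key: hasSum_mellin
  have key := hasSum_mellin (a := fun n : ℕ => (1 : ℂ)) (p := fun n => (t n) ^ 2)
    (F := fun x => ∑' n : ℕ, (Real.exp (-(t n) ^ 2 * x) : ℂ)) (s := s / 2)
    (fun n => Or.inr (pow_pos (hpos n) 2)) hs2 ?_ ?_
  · have hterm : ∀ n : ℕ, Complex.Gamma (s / 2) * 1 / ((t n ^ 2 : ℝ) : ℂ) ^ (s / 2)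
        = Complex.Gamma (s / 2) * (t n : ℂ) ^ (-s) := by
      intro n
      have harg : ((t n : ℂ)).arg = 0 := Complex.arg_ofReal_of_nonneg (hpos n).le
      have h2 : ((t n ^ 2 : ℝ) : ℂ) ^ (s / 2) = (t n : ℂ) ^ s := by
        push_cast
        rw [← Complex.cpow_nat_mul' (n := 2) (by rw [harg]; simpa using Real.pi_pos)
          (by rw [harg]; simpa using Real.pi_pos.le)]
        norm_num
        congr 1
        ring
      rw [h2, mul_one, Complex.cpow_neg, div_eq_mul_inv]
    have heq := key.tsum_eq
    simp_rw [hterm] at heq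
    rw [tsum_mul_left] at heq
    rw [heq, mellin]
    simp only [smul_eq_mul]
  · intro x hx
    rw [mem_Ioi] at hx
    have := (Complex.summable_ofReal.mpr (hsum_exp x hx)).hasSum
    simpa [neg_mul] using this
  · -- summability of 1 / (t n ^ 2) ^ (s/2).re
    simp only [norm_one]
    apply Summable.of_norm_bounded_eventually_nat hσ
    filter_upwards [htop.eventually_ge_atTop 1] with n hn
    have h1 : ((t n) ^ 2) ^ (s / 2).re = t n ^ s.re := by
      rw [← Real.rpow_natCast (t n) 2, ← Real.rpow_mul (hpos n).le, Complex.div_ofNat_re]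
      norm_num
      congr 1
      ring
    rw [Real.norm_eq_abs, abs_of_nonneg (by positivity), h1, one_div, ← Real.rpow_neg (hpos n).le]
    exact Real.rpow_le_rpow_of_exponent_le hn (by linarith)
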